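/- In the formal Weyl algebra over a symplectic vector space, the center of the Moyal product algebra consists exactly of the elements independent of the variables yⁱ, i.e. the scalars ℝ[[ℏ]]. -/

import Mathlib

/-!
The formal Weyl algebra `ℝ[[y¹,…,y^m, ℏ]]` is represented concretely by its
coefficients: an element is a function `(Fin m →₀ ℕ) → ℕ → ℝ`, sending a monomial
`y^d` and a power `l` to the coefficient of `y^d ℏ^l`.  Partial derivatives, the
commutative product, and the Moyal star product
`a ∘ b = Σ_q (1/q!) (−ℏ/2)^q ω^{i₁j₁}⋯ω^{i_q j_q} ∂^q a/∂y^{i⃗} ∂^q b/∂y^{j⃗}`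
are defined coefficientwise (the `q`-sum is finite in each `ℏ`-coefficient).
-/

open scoped BigOperators

noncomputable section

/-- Coefficients of a formal power series in `y¹,…,y^m` and `ℏ`. -/
def Weyl (m : ℕ) : Type := (Fin m →₀ ℕ) → ℕ → ℝ

variable {m : ℕ}

/-- Partial derivative `∂/∂yⁱ`. -/
def wDeriv (i : Fin m) (a : Weyl m) : Weyl m :=
  fun d l => ((d i : ℝ) + 1) * a (d + Finsupp.single i 1) l

/-- Iterated partial derivatives `∂^q/∂y^{i₁}⋯∂y^{i_q}`. -/
def wDerivs : ∀ q : ℕ, (Fin q → Fin m) → Weyl m → Weyl m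
  | 0, _, a => a
  | q + 1, f, a => wDeriv (f 0) (wDerivs q (fun t => f t.succ) a)

/-- The (commutative) product of formal power series. -/
def wMul (a b : Weyl m) : Weyl m :=
  fun d l => ∑ p ∈ Finset.HasAntidiagonal.antidiagonal d, ∑ s ∈ Finset.HasAntidiagonal.antidiagonal l,
    a p.1 s.1 * b p.2 s.2

/-- The `q`-th bidifferential term
`ω^{i₁j₁}⋯ω^{i_qj_q} (∂^q a/∂y^{i⃗})(∂^q b/∂y^{j⃗})`. -/
def moyalTerm (Ω : Matrix (Fin m) (Fin m) ℝ) (q : ℕ) (a b : Weyl m) : Weyl m :=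
  fun d l => ∑ I : Fin q → Fin m, ∑ J : Fin q → Fin m,
    (∏ t : Fin q, Ω (I t) (J t)) * wMul (wDerivs q I a) (wDerivs q J b) d l

/-- The Moyal star product, coefficientwise in `ℏ`:
`a ∘ b = Σ_q (1/q!)(−ℏ/2)^q (q-th term)`. -/
def moyal (Ω : Matrix (Fin m) (Fin m) ℝ) (a b : Weyl m) : Weyl m :=
  fun d l => ∑ q ∈ Finset.range (l + 1),
    (((-1 : ℝ) / 2) ^ q / (Nat.factorial q : ℝ)) * moyalTerm Ω q a b d (l - q)

def wOne : Weyl m := fun d l => if d = 0 ∧ l = 0 then 1 else 0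
def wY (j : Fin m) : Weyl m := fun d l => if d = Finsupp.single j 1 ∧ l = 0 then 1 else 0
def IsScalar (f : Weyl m) : Prop := ∀ d l, d ≠ 0 → f d l = 0

lemma wMul_comm (a b : Weyl m) : wMul a b = wMul b a := by
  funext d l
  unfold wMul
  conv_lhs => rw [← Finset.HasAntidiagonal.map_swap_antidiagonal (n := d)]
  rw [Finset.sum_map]
  refine Finset.sum_congr rfl fun p _ => ?_
  conv_lhs => rw [← Finset.HasAntidiagonal.map_swap_antidiagonal (n := l)]
  rw [Finset.sum_map]
  refine Finset.sum_congr rfl fun s _ => ?_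
  simp [mul_comm]

lemma add_single_ne_zero (d : Fin m →₀ ℕ) (i : Fin m) :
    d + Finsupp.single i 1 ≠ 0 := by
  intro h
  have := DFunLike.congr_fun h i
  simp [Finsupp.add_apply] at this

lemma wDeriv_of_scalar {f : Weyl m} (hf : IsScalar f) (i : Fin m) :
    wDeriv i f = fun _ _ => 0 := by
  funext d l
  unfold wDeriv
  rw [hf _ _ (add_single_ne_zero d i), mul_zero]

lemma zero_isScalar : IsScalar (fun _ _ => (0:ℝ) : Weyl m) := fun _ _ _ => rfl

lemma wDerivs_of_scalar {a : Weyl m} (ha : IsScalar a) :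
    ∀ q, q ≠ 0 → ∀ f : Fin q → Fin m, wDerivs q f a = fun _ _ => 0 := by
  intro q
  induction q with
  | zero => intro h; exact absurd rfl h
  | succ r ih =>
    intro _ f
    show wDeriv (f 0) (wDerivs r (fun t => f t.succ) a) = _
    cases r with
    | zero => exact wDeriv_of_scalar ha (f 0)
    | succ s =>
      rw [ih (Nat.succ_ne_zero s) _]
      exact wDeriv_of_scalar zero_isScalar (f 0)

lemma add_single_eq_single_iff (d : Fin m →₀ ℕ) (i j : Fin m) :
    d + Finsupp.single i 1 = Finsupp.single j 1 ↔ i = j ∧ d = 0 := by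
  constructor
  · intro h
    have hi := DFunLike.congr_fun h i
    simp [Finsupp.add_apply] at hi
    by_cases hij : i = j
    · subst hij
      refine ⟨rfl, ?_⟩
      have : d + Finsupp.single i 1 = 0 + Finsupp.single i 1 := by simpa using h
      exact add_right_cancel this
    · rw [Finsupp.single_apply, if_neg (fun hh => hij hh.symm)] at hi
      omega
  · rintro ⟨rfl, rfl⟩
    simp

lemma wDeriv_wY (i j : Fin m) :
    wDeriv i (wY j) = if i = j then wOne else fun _ _ => 0 := by
  funext d l
  show ((d i : ℝ) + 1) * (if d + Finsupp.single i 1 = Finsupp.single j 1 ∧ l = 0 then 1 else 0) = _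
  simp only [add_single_eq_single_iff]
  by_cases h : i = j ∧ d = 0 ∧ l = 0
  · obtain ⟨h1, h2, h3⟩ := h
    subst h1; subst h2; subst h3
    simp [wOne]
  · rw [if_neg (by tauto)]
    rw [mul_zero]
    by_cases hij : i = j
    · refine Eq.trans ?_ (congrArg (fun f : Weyl m => f d l) (if_pos (t := wOne) (e := (fun _ _ => 0 : Weyl m)) hij)).symm
      have : ¬(d = 0 ∧ l = 0) := by tauto
      simp [wOne, this]
    · exact (congrArg (fun f : Weyl m => f d l) (if_neg (t := wOne) (e := (fun _ _ => 0 : Weyl m)) hij)).symm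

lemma wDeriv_wY_self (j : Fin m) : wDeriv j (wY j) = wOne :=
  (wDeriv_wY j j).trans (if_pos rfl)

lemma wDeriv_wY_ne {i j : Fin m} (h : i ≠ j) : wDeriv i (wY j) = fun _ _ => 0 :=
  (wDeriv_wY i j).trans (if_neg h)

lemma wOne_isScalar : IsScalar (wOne : Weyl m) := by
  intro d l hd; simp [wOne, hd]

lemma wDerivs_wY_isScalar (j : Fin m) :
    ∀ q, q ≠ 0 → ∀ J : Fin q → Fin m, IsScalar (wDerivs q J (wY j)) := by
  intro q
  induction q with
  | zero => intro h; exact absurd rfl h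
  | succ r ih =>
    intro _ J
    show IsScalar (wDeriv (J 0) (wDerivs r (fun t => J t.succ) (wY j)))
    cases r with
    | zero =>
      show IsScalar (wDeriv (J 0) (wY j))
      rw [wDeriv_wY]
      split_ifs
      · have e : (if J 0 = j then wOne else fun _ _ => 0 : Weyl m) = wOne := if_pos ‹J 0 = j›
        exact cast (congrArg IsScalar e.symm) wOne_isScalar
      · have e : (if J 0 = j then wOne else fun _ _ => 0 : Weyl m) = fun _ _ => 0 := if_neg ‹¬J 0 = j›
        exact cast (congrArg IsScalar e.symm) zero_isScalar
    | succ s =>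
      rw [wDeriv_of_scalar (ih (Nat.succ_ne_zero s) _) (J 0)]
      exact zero_isScalar

lemma wDerivs_wY_zero (j : Fin m) :
    ∀ q, 2 ≤ q → ∀ J : Fin q → Fin m, wDerivs q J (wY j) = fun _ _ => 0 := by
  intro q hq J
  obtain ⟨r, rfl⟩ : ∃ r, q = r + 2 := ⟨q - 2, by omega⟩
  show wDeriv (J 0) (wDerivs (r+1) (fun t => J t.succ) (wY j)) = _
  exact wDeriv_of_scalar (wDerivs_wY_isScalar j (r+1) (Nat.succ_ne_zero r) _) _

lemma wMul_wOne (f : Weyl m) : wMul f wOne = f := by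
  funext d l
  unfold wMul
  rw [Finset.sum_eq_single ((d, 0) : (Fin m →₀ ℕ) × (Fin m →₀ ℕ))]
  · rw [Finset.sum_eq_single ((l, 0) : ℕ × ℕ)]
    · simp [wOne]
    · intro s hs hne
      have h2 : s.2 ≠ 0 := by
        intro h0
        apply hne
        have h1 := Finset.HasAntidiagonal.mem_antidiagonal.mp hs
        rw [h0, add_zero] at h1
        exact Prod.ext h1 h0
      simp [wOne, h2]
    · intro h
      exact absurd (Finset.HasAntidiagonal.mem_antidiagonal.mpr (by simp)) h
  · intro p hp hne
    have h2 : p.2 ≠ 0 := by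
      intro h0
      apply hne
      have h1 := Finset.HasAntidiagonal.mem_antidiagonal.mp hp
      rw [h0, add_zero] at h1
      exact Prod.ext h1 h0
    refine Finset.sum_eq_zero fun s _ => ?_
    simp [wOne, h2]
  · intro h
    exact absurd (Finset.HasAntidiagonal.mem_antidiagonal.mpr (by simp)) h

lemma wOne_wMul (f : Weyl m) : wMul wOne f = f := by
  rw [wMul_comm]; exact wMul_wOne f

lemma wMul_zero_right (f : Weyl m) : wMul f (fun _ _ => 0) = fun _ _ => 0 := by
  funext d l; simp [wMul]

lemma wMul_zero_left (f : Weyl m) : wMul (fun _ _ => 0) f = fun _ _ => 0 := by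
  funext d l; simp [wMul]

lemma moyalTerm_zero (Ω : Matrix (Fin m) (Fin m) ℝ) (a b : Weyl m) :
    moyalTerm Ω 0 a b = wMul a b := by
  funext d l
  unfold moyalTerm
  simp [wDerivs]

lemma moyalTerm_right_zero (Ω : Matrix (Fin m) (Fin m) ℝ) (q : ℕ) (a b : Weyl m)
    (hb : ∀ J : Fin q → Fin m, wDerivs q J b = fun _ _ => 0) :
    moyalTerm Ω q a b = fun _ _ => 0 := by
  funext d l
  unfold moyalTerm
  refine Finset.sum_eq_zero fun I _ => Finset.sum_eq_zero fun J _ => ?_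
  rw [hb J, wMul_zero_right]
  simp

lemma moyalTerm_left_zero (Ω : Matrix (Fin m) (Fin m) ℝ) (q : ℕ) (a b : Weyl m)
    (ha : ∀ I : Fin q → Fin m, wDerivs q I a = fun _ _ => 0) :
    moyalTerm Ω q a b = fun _ _ => 0 := by
  funext d l
  unfold moyalTerm
  refine Finset.sum_eq_zero fun I _ => Finset.sum_eq_zero fun J _ => ?_
  rw [ha I, wMul_zero_left]
  simp

lemma moyalTerm_one (Ω : Matrix (Fin m) (Fin m) ℝ) (a b : Weyl m) (d : Fin m →₀ ℕ) (l : ℕ) :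
    moyalTerm Ω 1 a b d l = ∑ i : Fin m, ∑ j : Fin m, Ω i j * wMul (wDeriv i a) (wDeriv j b) d l := by
  unfold moyalTerm
  rw [← Equiv.sum_comp (Equiv.funUnique (Fin 1) (Fin m)).symm]
  refine Finset.sum_congr rfl fun i _ => ?_
  rw [← Equiv.sum_comp (Equiv.funUnique (Fin 1) (Fin m)).symm]
  refine Finset.sum_congr rfl fun j _ => ?_
  simp [wDerivs, Equiv.funUnique]

lemma sum_moyal_one_right (Ω : Matrix (Fin m) (Fin m) ℝ) (a : Weyl m) (j : Fin m)
    (d : Fin m →₀ ℕ) (l : ℕ) :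
    moyalTerm Ω 1 a (wY j) d l = ∑ i : Fin m, Ω i j * wDeriv i a d l := by
  rw [moyalTerm_one]
  refine Finset.sum_congr rfl fun i _ => ?_
  rw [Finset.sum_eq_single j]
  · rw [wDeriv_wY_self, wMul_wOne]
  · intro j' _ hne
    rw [wDeriv_wY_ne hne, wMul_zero_right]
    simp
  · simp

lemma sum_moyal_one_left (Ω : Matrix (Fin m) (Fin m) ℝ) (a : Weyl m) (j : Fin m)
    (d : Fin m →₀ ℕ) (l : ℕ) :
    moyalTerm Ω 1 (wY j) a d l = ∑ j' : Fin m, Ω j j' * wDeriv j' a d l := by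
  rw [moyalTerm_one]
  rw [Finset.sum_eq_single j]
  · refine Finset.sum_congr rfl fun j' _ => ?_
    rw [wDeriv_wY_self, wOne_wMul]
  · intro i _ hne
    refine Finset.sum_eq_zero fun j' _ => ?_
    rw [wDeriv_wY_ne hne, wMul_zero_left]
    simp
  · simp

/-- **The center of the formal Weyl algebra**: an element commutes with every
element of the Moyal algebra iff it is independent of the variables `yⁱ`,
i.e. lies in `ℝ[[ℏ]]`.  Here `Ω = (ω^{ij})` is the inverse of a nondegenerate
antisymmetric matrix `ω`. -/
theorem moyal_center (ω Ω : Matrix (Fin m) (Fin m) ℝ)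
    (halt : ∀ i j, ω j i = - ω i j)
    (hinv₁ : ω * Ω = 1) (hinv₂ : Ω * ω = 1) (a : Weyl m) :
    (∀ b : Weyl m, moyal Ω a b = moyal Ω b a)
      ↔ (∀ (d : Fin m →₀ ℕ) (l : ℕ), d ≠ 0 → a d l = 0) := by
  constructor
  · intro h d0 l0 hd0
    -- antisymmetry of Ω
    have hΩT : Ω.transpose = -Ω := by
      have hωT : ω.transpose = -ω := by
        ext i j; simp [Matrix.transpose_apply, halt i j]
      have h1 : ω * Ω.transpose = -1 := by
        have h2 := congrArg Matrix.transpose hinv₂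
        rw [Matrix.transpose_mul, hωT, Matrix.transpose_one, neg_mul] at h2
        exact neg_eq_iff_eq_neg.mp h2
      calc Ω.transpose = (Ω * ω) * Ω.transpose := by rw [hinv₂, one_mul]
        _ = Ω * (ω * Ω.transpose) := by rw [mul_assoc]
        _ = Ω * (-1) := by rw [h1]
        _ = -Ω := by simp
    have hΩ : ∀ i j, Ω j i = -Ω i j := by
      intro i j
      have := Matrix.ext_iff.mpr hΩT i j
      simpa [Matrix.transpose_apply, Matrix.neg_apply] using this
    have key : ∀ (d : Fin m →₀ ℕ) (l : ℕ) (i : Fin m), wDeriv i a d l = 0 := by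
      intro d l
      have hterm : ∀ j : Fin m, moyalTerm Ω 1 a (wY j) d l = moyalTerm Ω 1 (wY j) a d l := by
        intro j
        have heval := congrFun (congrFun (h (wY j)) d) (l + 1)
        unfold moyal at heval
        have hsub : ∑ q ∈ Finset.range (l + 1 + 1),
            ((((-1 : ℝ) / 2) ^ q / (Nat.factorial q : ℝ)) * moyalTerm Ω q a (wY j) d (l + 1 - q)
              - (((-1 : ℝ) / 2) ^ q / (Nat.factorial q : ℝ)) * moyalTerm Ω q (wY j) a d (l + 1 - q)) = 0 := by
          rw [Finset.sum_sub_distrib, heval, sub_self]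
        rw [Finset.sum_eq_single 1] at hsub
        · have hc1 : (((-1 : ℝ) / 2) ^ 1 / (Nat.factorial 1 : ℝ)) ≠ 0 := by
            norm_num [Nat.factorial]
          have hs2 : (((-1 : ℝ) / 2) ^ 1 / (Nat.factorial 1 : ℝ))
              * (moyalTerm Ω 1 a (wY j) d (l + 1 - 1) - moyalTerm Ω 1 (wY j) a d (l + 1 - 1)) = 0 := by
            rw [mul_sub]; exact hsub
          have h3 := (mul_eq_zero.mp hs2).resolve_left hc1
          have h4 := sub_eq_zero.mp h3
          simpa using h4
        · intro q hq hne
          cases q with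
          | zero => rw [moyalTerm_zero, moyalTerm_zero, wMul_comm]; ring
          | succ r =>
            cases r with
            | zero => exact absurd rfl hne
            | succ s =>
              rw [moyalTerm_right_zero Ω (s + 1 + 1) a (wY j) (wDerivs_wY_zero j (s + 1 + 1) (by omega)),
                  moyalTerm_left_zero Ω (s + 1 + 1) (wY j) a (wDerivs_wY_zero j (s + 1 + 1) (by omega))]
              simp
        · intro h1
          exact absurd (Finset.mem_range.mpr (by omega)) h1
      have hz : ∀ j, ∑ i : Fin m, Ω i j * wDeriv i a d l = 0 := by
        intro j
        have hs := hterm j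
        rw [sum_moyal_one_right, sum_moyal_one_left] at hs
        have hr : ∑ j' : Fin m, Ω j j' * wDeriv j' a d l
            = -∑ j' : Fin m, Ω j' j * wDeriv j' a d l := by
          rw [← Finset.sum_neg_distrib]
          refine Finset.sum_congr rfl fun j' _ => ?_
          rw [hΩ j' j]; ring
        rw [hr] at hs
        linarith
      intro i
      have hvm : Matrix.vecMul (fun i => wDeriv i a d l) Ω = 0 := by
        funext j
        have hj : Matrix.vecMul (fun i => wDeriv i a d l) Ω j
            = ∑ i : Fin m, Ω i j * wDeriv i a d l := by
          simp [Matrix.vecMul, dotProduct, mul_comm]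
        rw [hj, hz j]
        simp
      have hg : (fun i => wDeriv i a d l) = 0 := by
        have h1 := congrArg (fun v => Matrix.vecMul v ω) hvm
        simp only [Matrix.vecMul_vecMul, Matrix.zero_vecMul] at h1
        rw [hinv₂, Matrix.vecMul_one] at h1
        exact h1
      exact congrFun hg i
    obtain ⟨i, hi⟩ := Finsupp.ne_iff.mp hd0
    simp only [Finsupp.coe_zero, Pi.zero_apply] at hi
    have hle : Finsupp.single i 1 ≤ d0 := by
      rw [Finsupp.single_le_iff]; omega
    have hrec : (d0 - Finsupp.single i 1) + Finsupp.single i 1 = d0 := tsub_add_cancel_of_le hle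
    have hk := key (d0 - Finsupp.single i 1) l0 i
    unfold wDeriv at hk
    rw [hrec] at hk
    rcases mul_eq_zero.mp hk with hp | hz
    · exfalso
      have hnn : (0:ℝ) ≤ (((d0 - Finsupp.single i 1 : Fin m →₀ ℕ)) i : ℝ) := Nat.cast_nonneg _
      linarith
    · exact hz
  · intro ha b
    funext d l
    unfold moyal
    refine Finset.sum_congr rfl fun q _ => ?_
    congr 1
    cases q with
    | zero => rw [moyalTerm_zero, moyalTerm_zero, wMul_comm]
    | succ r =>
      rw [moyalTerm_left_zero Ω (r+1) a b
            (fun I => wDerivs_of_scalar ha (r+1) (Nat.succ_ne_zero r) I),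
          moyalTerm_right_zero Ω (r+1) b a
            (fun J => wDerivs_of_scalar ha (r+1) (Nat.succ_ne_zero r) J)]

end
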